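/- Let X : ℝ² → ℝ³ be a smooth map with components given by the Generalized Weierstrass integrands: ∂_z(X₁ - iX₂) = i Ψ₂², ∂_{z̄}(X₁ - iX₂) = -i Ψ₁², ∂_z X₃ = -Ψ₂·conj(Ψ₁), ∂_{z̄} X₃ = -Ψ₁·conj(Ψ₂), where (Ψ₁, Ψ₂) solves the Dirac equation. Set W = X₁ - iX₂. Then the infinitesimal spinor variation δΨ₁ = -X₃ Ψ₁ + i W conj(Ψ₂), δΨ₂ = -X₃ Ψ₂ - i W conj(Ψ₁) induces δ(∂_z X₃) := -(δΨ₂·conj Ψ₁ + Ψ₂·conj(δΨ₁)) = ∂_z(W·conj(W) - X₃²), i.e. the variation of X₃ integrates to W conj(W) - X₃² = X₁² + X₂² - X₃². -/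

import Mathlib

open Complex

/-- Wirtinger derivative `∂_z f = (∂_x f - i ∂_y f)/2`. -/
noncomputable def wdz (f : ℂ → ℂ) (z : ℂ) : ℂ :=
  (fderiv ℝ f z 1 - Complex.I * fderiv ℝ f z Complex.I) / 2

/-- Wirtinger derivative `∂_z̄ f = (∂_x f + i ∂_y f)/2`. -/
noncomputable def wdzbar (f : ℂ → ℂ) (z : ℂ) : ℂ :=
  (fderiv ℝ f z 1 + Complex.I * fderiv ℝ f z Complex.I) / 2

lemma wdz_mul (f g : ℂ → ℂ) (z : ℂ) (hf : DifferentiableAt ℝ f z)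
    (hg : DifferentiableAt ℝ g z) :
    wdz (fun w => f w * g w) z = wdz f z * g z + f z * wdz g z := by
  unfold wdz
  rw [fderiv_fun_mul hf hg]
  simp only [ContinuousLinearMap.add_apply, ContinuousLinearMap.smul_apply, smul_eq_mul]
  ring

lemma wdz_sub (f g : ℂ → ℂ) (z : ℂ) (hf : DifferentiableAt ℝ f z)
    (hg : DifferentiableAt ℝ g z) :
    wdz (fun w => f w - g w) z = wdz f z - wdz g z := by
  unfold wdz
  rw [fderiv_fun_sub hf hg]
  simp only [ContinuousLinearMap.sub_apply]
  ring

/-- The spinor variation realizing the conformal inversion generator: the variation of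
the `dz`-coefficient of `dX₃` is the total derivative of `W conj(W) - X₃² = X₁²+X₂²-X₃²`. -/
theorem stmt13 (U : ℂ → ℝ) (Ψ₁ Ψ₂ W X₃ : ℂ → ℂ) (X₁ X₂ : ℂ → ℝ)
    (hΨ1 : Differentiable ℝ Ψ₁) (hΨ2 : Differentiable ℝ Ψ₂)
    (hWd : Differentiable ℝ W) (hXd : Differentiable ℝ X₃)
    (hXreal : ∀ z, starRingEnd ℂ (X₃ z) = X₃ z)
    (hWdef : ∀ z, W z = (X₁ z : ℂ) - Complex.I * (X₂ z : ℂ))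
    (hd1 : ∀ z, wdz Ψ₁ z = (U z : ℂ) * Ψ₂ z)
    (hd2 : ∀ z, wdzbar Ψ₂ z = -(U z : ℂ) * Ψ₁ z)
    (hWz : ∀ z, wdz W z = Complex.I * (Ψ₂ z) ^ 2)
    (hWzb : ∀ z, wdzbar W z = -Complex.I * (Ψ₁ z) ^ 2)
    (hWcz : ∀ z, wdz (fun w => starRingEnd ℂ (W w)) z
      = Complex.I * (starRingEnd ℂ (Ψ₁ z)) ^ 2)
    (hXz : ∀ z, wdz X₃ z = -(Ψ₂ z * starRingEnd ℂ (Ψ₁ z)))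
    (hXzb : ∀ z, wdzbar X₃ z = -(Ψ₁ z * starRingEnd ℂ (Ψ₂ z)))
    (δΨ₁ δΨ₂ : ℂ → ℂ)
    (hδ1 : ∀ z, δΨ₁ z = -(X₃ z) * Ψ₁ z + Complex.I * W z * starRingEnd ℂ (Ψ₂ z))
    (hδ2 : ∀ z, δΨ₂ z = -(X₃ z) * Ψ₂ z - Complex.I * W z * starRingEnd ℂ (Ψ₁ z)) :
    (∀ z, -(δΨ₂ z * starRingEnd ℂ (Ψ₁ z) + Ψ₂ z * starRingEnd ℂ (δΨ₁ z))
        = wdz (fun w => W w * starRingEnd ℂ (W w) - (X₃ w) ^ 2) z) ∧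
    (∀ z, W z * starRingEnd ℂ (W z) - (X₃ z) ^ 2
        = (X₁ z : ℂ) ^ 2 + (X₂ z : ℂ) ^ 2 - (X₃ z) ^ 2) := by
  have hWc : Differentiable ℝ (fun w => starRingEnd ℂ (W w)) :=
    Complex.conjCLE.differentiable.comp hWd
  constructor
  · intro z
    have h1 : wdz (fun w => W w * starRingEnd ℂ (W w) - (X₃ w) ^ 2) z
        = (wdz W z * starRingEnd ℂ (W z) + W z * wdz (fun w => starRingEnd ℂ (W w)) z)
          - (wdz X₃ z * X₃ z + X₃ z * wdz X₃ z) := by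
      have := wdz_sub (fun w => W w * starRingEnd ℂ (W w)) (fun w => (X₃ w) ^ 2) z
        ((hWd z).mul (hWc z)) (((hXd z)).pow 2)
      rw [this, wdz_mul W _ z (hWd z) (hWc z)]
      have hsq : wdz (fun w => (X₃ w) ^ 2) z = wdz X₃ z * X₃ z + X₃ z * wdz X₃ z := by
        have := wdz_mul X₃ X₃ z (hXd z) (hXd z)
        have he : (fun w => (X₃ w) ^ 2) = fun w => X₃ w * X₃ w := by
          funext w; ring
        rw [he, this]
      rw [hsq]
    rw [h1, hWz, hWcz, hXz, hδ1, hδ2]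
    simp only [map_add, map_sub, map_mul, map_neg, Complex.conj_I, hXreal z,
      Complex.conj_conj]
    ring
  · intro z
    rw [hWdef]
    simp only [map_sub, map_mul, Complex.conj_I, Complex.conj_ofReal]
    ring_nf
    rw [Complex.I_sq]
    ring
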